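/- Let A and B be unital C*-algebras, let ε, δ ≥ 0, and let π : A → B be a bounded ℂ-linear map which is star-preserving, ε-multiplicative, and unital (π(1) = 1). If u ∈ A satisfies ‖u*·u − 1‖ ≤ δ and ‖u·u* − 1‖ ≤ δ, then ‖π(u)*·π(u) − 1‖ ≤ ε + (1 + 3ε)·δ and ‖π(u)·π(u)* − 1‖ ≤ ε + (1 + 3ε)·δ. -/

import Mathlib

/-- Norm of a product of a self-adjoint element with itself. -/
lemma aux_sa_norm_mul_self {B : Type*} [CStarAlgebra B] (a : B) (h : star a = a) :
    ‖a * a‖ = ‖a‖ * ‖a‖ := by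
  calc ‖a * a‖ = ‖star a * a‖ := by rw [h]
    _ = ‖a‖ * ‖a‖ := CStarRing.norm_star_mul_self

/-- A star-preserving `ε`-multiplicative bounded linear map is `(1+ε)`-bounded on the
self-adjoint unit ball. -/
lemma aux_bound_unit {A B : Type*} [CStarAlgebra A] [CStarAlgebra B]
    (ε : ℝ) (hε : 0 ≤ ε) (f : A →L[ℂ] B)
    (hstar : ∀ a : A, f (star a) = star (f a))
    (hmul : ∀ a b : A, ‖f (a * b) - f a * f b‖ ≤ ε * ‖a‖ * ‖b‖)
    (x : A) (hx : star x = x) (hx1 : ‖x‖ ≤ 1) : ‖f x‖ ≤ 1 + ε := by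
  by_contra hcon
  push_neg at hcon
  set s : ℝ := ‖f x‖ - (1 + ε) with hs
  have hs0 : 0 < s := by simp only [hs]; linarith
  -- powers of x are self-adjoint with norm at most one
  have hpow_sa : ∀ k : ℕ, star (x ^ k) = x ^ k := fun k => by rw [star_pow, hx]
  have hfsa : ∀ k : ℕ, star (f (x ^ k)) = f (x ^ k) := fun k => by
    rw [← hstar, hpow_sa]
  have hxk : ∀ k : ℕ, 0 < k → ‖x ^ k‖ ≤ 1 := fun k hk =>
    (norm_pow_le' x hk).trans (pow_le_one₀ (norm_nonneg x) hx1)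
  -- key recursive inequality
  have hrec : ∀ n : ℕ, ‖f (x ^ 2 ^ n)‖ ^ 2 ≤ ‖f (x ^ 2 ^ (n + 1))‖ + ε := by
    intro n
    have h2 : x ^ 2 ^ n * x ^ 2 ^ n = x ^ 2 ^ (n + 1) := by
      rw [← pow_add, ← two_mul, ← pow_succ']
    have hmm : ‖f (x ^ 2 ^ (n+1)) - f (x ^ 2 ^ n) * f (x ^ 2 ^ n)‖
        ≤ ε * ‖x ^ 2 ^ n‖ * ‖x ^ 2 ^ n‖ := by
      rw [← h2]; exact hmul _ _
    have hno : ‖f (x ^ 2 ^ n) * f (x ^ 2 ^ n)‖ = ‖f (x ^ 2 ^ n)‖ ^ 2 := by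
      rw [aux_sa_norm_mul_self _ (hfsa _), sq]
    have hxn : ‖x ^ 2 ^ n‖ ≤ 1 := hxk _ (Nat.pow_pos (by norm_num) : 0 < 2 ^ n)
    have htri : ‖f (x ^ 2 ^ n) * f (x ^ 2 ^ n)‖ - ‖f (x ^ 2 ^ (n+1))‖
        ≤ ‖f (x ^ 2 ^ (n+1)) - f (x ^ 2 ^ n) * f (x ^ 2 ^ n)‖ := by
      have h := norm_sub_norm_le (f (x ^ 2 ^ n) * f (x ^ 2 ^ n)) (f (x ^ 2 ^ (n+1)))
      rw [norm_sub_rev] at h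
      exact h
    have hxnn := norm_nonneg (x ^ 2 ^ n)
    have hεa : ε * ‖x ^ 2 ^ n‖ * ‖x ^ 2 ^ n‖ ≤ ε := by
      calc ε * ‖x ^ 2 ^ n‖ * ‖x ^ 2 ^ n‖ ≤ ε * 1 * 1 := by gcongr
        _ = ε := by ring
    linarith [hmm, htri, hno.symm.le, hno.le, hεa]
  -- growth by induction
  have hgrow : ∀ n : ℕ, 1 + ε + 2 ^ n * s ≤ ‖f (x ^ 2 ^ n)‖ := by
    intro n
    induction n with
    | zero => simp [hs]
    | succ n ih =>
      have h1 : (0:ℝ) ≤ 1 + ε + 2 ^ n * s := by positivity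
      have h2 := hrec n
      have h3 : (1 + ε + 2 ^ n * s) ^ 2 ≤ ‖f (x ^ 2 ^ n)‖ ^ 2 := by
        exact pow_le_pow_left₀ h1 ih 2
      have hp : (0:ℝ) < 2 ^ n := by positivity
      have h4 : (2:ℝ) ^ (n + 1) = 2 ^ n * 2 := pow_succ 2 n
      rw [h4]
      nlinarith [h2, h3, hp, hs0, hε, sq_nonneg (ε + 2 ^ n * s)]
  -- contradiction with boundedness of f
  obtain ⟨n, hn⟩ := pow_unbounded_of_one_lt (‖f‖ / s) (by norm_num : (1:ℝ) < 2)
  have hb : ‖f (x ^ 2 ^ n)‖ ≤ ‖f‖ := by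
    calc ‖f (x ^ 2 ^ n)‖ ≤ ‖f‖ * ‖x ^ 2 ^ n‖ := f.le_opNorm _
      _ ≤ ‖f‖ * 1 := by
          exact mul_le_mul_of_nonneg_left (hxk _ (Nat.pow_pos (by norm_num) : 0 < 2 ^ n))
            (norm_nonneg f)
      _ = ‖f‖ := mul_one _
  have hbig : ‖f‖ < 2 ^ n * s := by
    rw [div_lt_iff₀ hs0] at hn; linarith
  have := hgrow n
  nlinarith [this, hb, hbig, hε]

/-- A star-preserving `ε`-multiplicative bounded linear map is `(1+ε)`-bounded on
self-adjoint elements. -/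
lemma aux_bound_sa {A B : Type*} [CStarAlgebra A] [CStarAlgebra B]
    (ε : ℝ) (hε : 0 ≤ ε) (f : A →L[ℂ] B)
    (hstar : ∀ a : A, f (star a) = star (f a))
    (hmul : ∀ a b : A, ‖f (a * b) - f a * f b‖ ≤ ε * ‖a‖ * ‖b‖)
    (w : A) (hw : star w = w) : ‖f w‖ ≤ (1 + ε) * ‖w‖ := by
  rcases eq_or_ne w 0 with rfl | hw0
  · simp
  · have hnw : (0:ℝ) < ‖w‖ := norm_pos_iff.mpr hw0
    set x : A := ((‖w‖⁻¹ : ℝ) : ℂ) • w with hxdef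
    have hxsa : star x = x := by
      rw [hxdef, star_smul, hw, Complex.star_def, Complex.conj_ofReal]
    have hx1 : ‖x‖ ≤ 1 := by
      rw [hxdef, norm_smul]
      simp only [Complex.norm_real, Real.norm_eq_abs, abs_of_pos (inv_pos.mpr hnw)]
      rw [inv_mul_cancel₀ (ne_of_gt hnw)]
    have key := aux_bound_unit ε hε f hstar hmul x hxsa hx1
    have hfx : f x = ((‖w‖⁻¹ : ℝ) : ℂ) • f w := by rw [hxdef, map_smul]
    have hnfx : ‖f x‖ = ‖w‖⁻¹ * ‖f w‖ := by
      rw [hfx, norm_smul]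
      simp [abs_of_pos (inv_pos.mpr hnw)]
    rw [hnfx] at key
    calc ‖f w‖ = ‖w‖ * (‖w‖⁻¹ * ‖f w‖) := by
          field_simp
      _ ≤ ‖w‖ * (1 + ε) := mul_le_mul_of_nonneg_left key (le_of_lt hnw)
      _ = (1 + ε) * ‖w‖ := mul_comm _ _

/-- One half of the unitary estimate. -/
lemma aux_half {A B : Type*} [CStarAlgebra A] [CStarAlgebra B]
    (ε δ : ℝ) (hε : 0 ≤ ε) (hδ : 0 ≤ δ) (f : A →L[ℂ] B)
    (hstar : ∀ a : A, f (star a) = star (f a))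
    (hmul : ∀ a b : A, ‖f (a * b) - f a * f b‖ ≤ ε * ‖a‖ * ‖b‖)
    (hone : f 1 = 1)
    (v : A) (hv : ‖star v * v - 1‖ ≤ δ) :
    ‖star (f v) * f v - 1‖ ≤ ε + (1 + 3 * ε) * δ := by
  have hone_le : ‖(1:A)‖ ≤ 1 := by
    have h : ‖(1:A)‖ * ‖(1:A)‖ = ‖(1:A)‖ := by
      calc ‖(1:A)‖ * ‖(1:A)‖ = ‖star (1:A) * 1‖ := CStarRing.norm_star_mul_self.symm
        _ = ‖(1:A)‖ := by simp
    nlinarith [norm_nonneg (1:A)]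
  -- ‖v‖² ≤ 1 + δ
  have hv2 : ‖v‖ * ‖v‖ ≤ 1 + δ := by
    have h1 : ‖star v * v‖ = ‖v‖ * ‖v‖ := CStarRing.norm_star_mul_self
    have h2 : ‖star v * v‖ ≤ ‖star v * v - 1‖ + ‖(1:A)‖ := by
      calc ‖star v * v‖ = ‖(star v * v - 1) + 1‖ := by rw [sub_add_cancel]
        _ ≤ ‖star v * v - 1‖ + ‖(1:A)‖ := norm_add_le _ _
    linarith
  -- the defect w is self-adjoint
  have hwsa : star (star v * v - 1) = star v * v - 1 := by
    simp [star_sub, star_mul]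
  have hfw : ‖f (star v * v - 1)‖ ≤ (1 + ε) * δ := by
    calc ‖f (star v * v - 1)‖ ≤ (1 + ε) * ‖star v * v - 1‖ :=
          aux_bound_sa ε hε f hstar hmul _ hwsa
      _ ≤ (1 + ε) * δ := by
          exact mul_le_mul_of_nonneg_left hv (by linarith)
  have hfw' : f (star v * v - 1) = f (star v * v) - 1 := by
    rw [map_sub, hone]
  have hmm : ‖f (star v * v) - f (star v) * f v‖ ≤ ε * ‖v‖ * ‖v‖ := by
    have := hmul (star v) v
    rwa [norm_star] at this
  have hdecomp : star (f v) * f v - 1 =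
      -(f (star v * v) - f (star v) * f v) + (f (star v * v) - 1) := by
    rw [← hstar]; abel
  calc ‖star (f v) * f v - 1‖
      = ‖-(f (star v * v) - f (star v) * f v) + (f (star v * v) - 1)‖ := by
        rw [hdecomp]
    _ ≤ ‖-(f (star v * v) - f (star v) * f v)‖ + ‖f (star v * v) - 1‖ := norm_add_le _ _
    _ = ‖f (star v * v) - f (star v) * f v‖ + ‖f (star v * v - 1)‖ := by
        rw [norm_neg, hfw']
    _ ≤ ε * ‖v‖ * ‖v‖ + (1 + ε) * δ := add_le_add hmm hfw
    _ ≤ ε + (1 + 3 * ε) * δ := by nlinarith [hv2, hε, hδ, norm_nonneg v]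

/-- A unital star-preserving `ε`-multiplicative bounded linear map between unital
C*-algebras sends quantitative unitaries to quantitative unitaries. -/
theorem almost_star_hom_map_almost_unitary {A B : Type*}
    [CStarAlgebra A] [CStarAlgebra B]
    (ε δ : ℝ) (hε : 0 ≤ ε) (hδ : 0 ≤ δ) (f : A →L[ℂ] B)
    (hstar : ∀ a : A, f (star a) = star (f a))
    (hmul : ∀ a b : A, ‖f (a * b) - f a * f b‖ ≤ ε * ‖a‖ * ‖b‖)
    (hone : f 1 = 1)
    (u : A) (hu1 : ‖star u * u - 1‖ ≤ δ) (hu2 : ‖u * star u - 1‖ ≤ δ) :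
    ‖star (f u) * f u - 1‖ ≤ ε + (1 + 3 * ε) * δ ∧
      ‖f u * star (f u) - 1‖ ≤ ε + (1 + 3 * ε) * δ := by
  constructor
  · exact aux_half ε δ hε hδ f hstar hmul hone u hu1
  · have h := aux_half ε δ hε hδ f hstar hmul hone (star u)
      (by rwa [star_star])
    rwa [hstar, star_star] at h
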